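/- Let p be a prime number and let (ℤ/pℤ)ˣ denote the multiplicative group of nonzero residues modulo p. Then there exist a function ρ : (ℤ/pℤ)ˣ → ℂ \ {0} and a function ψ : ℂ → (ℤ/pℤ)ˣ such that for every n ≥ 1 and all x₁, …, xₙ ∈ (ℤ/pℤ)ˣ, ψ(∑_{i=1}^n log(ρ(xᵢ))) = x₁ · x₂ · ⋯ · xₙ (the product taken modulo p), where log denotes the principal branch of the complex logarithm. -/
import Mathlib


/-- **KA representation of modular multiplication**: for a prime `p` there exist
`ρ : (ℤ/pℤ)ˣ → ℂ \ {0}` and `ψ : ℂ → (ℤ/pℤ)ˣ` such that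
`ψ (∑ i, log (ρ (x i))) = x₁ ⋯ xₙ` for every arity `n ≥ 1`, where `log` is the
principal branch of the complex logarithm. -/
theorem ka_representation_modular_multiplication (p : ℕ) (hp : p.Prime) :
    ∃ (ρ : (ZMod p)ˣ → ℂ) (ψ : ℂ → (ZMod p)ˣ),
      (∀ x : (ZMod p)ˣ, ρ x ≠ 0) ∧
      ∀ n : ℕ, 1 ≤ n → ∀ x : Fin n → (ZMod p)ˣ,
        ψ (∑ i : Fin n, Complex.log (ρ (x i))) = ∏ i : Fin n, x i := by
  haveI : Fact p.Prime := ⟨hp⟩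
  obtain ⟨g, hg⟩ := IsCyclic.exists_generator (α := (ZMod p)ˣ)
  have hpow : ∀ x : (ZMod p)ˣ, ∃ k : ℕ, g ^ k = x := by
    intro x
    obtain ⟨k, hk⟩ := hg x
    exact ⟨(k % (orderOf g : ℤ)).toNat, by
      rwa [← zpow_natCast, Int.toNat_of_nonneg
        (Int.emod_nonneg _ (by exact_mod_cast (orderOf_pos g).ne')),
        zpow_mod_orderOf]⟩
  classical
  set ind : (ZMod p)ˣ → ℕ := fun x => (hpow x).choose with hind
  have hindspec : ∀ x, g ^ ind x = x := fun x => (hpow x).choose_spec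
  refine ⟨fun x => Complex.exp (ind x), fun z => g ^ (round z.re).toNat, ?_, ?_⟩
  · intro x; exact Complex.exp_ne_zero _
  · intro n hn x
    have hlog : ∀ i : Fin n, Complex.log (Complex.exp (ind (x i))) = (ind (x i) : ℂ) := by
      intro i
      apply Complex.log_exp <;> simp [Real.pi_pos, Real.pi_nonneg]
    simp only [hlog]
    have h1 : (∑ i : Fin n, ((ind (x i) : ℂ))) = ((∑ i : Fin n, ind (x i) : ℕ) : ℂ) := by
      push_cast; ring
    rw [h1]
    have h2 : ((((∑ i : Fin n, ind (x i) : ℕ) : ℂ)).re) = ((∑ i : Fin n, ind (x i) : ℕ) : ℝ) := by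
      simp
    rw [h2, round_natCast, Int.toNat_natCast, ← Finset.prod_pow_eq_pow_sum]
    exact Finset.prod_congr rfl fun i _ => hindspec (x i)
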